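/- A degree-one polynomial P(x) = 1 + ∑_i a_i x_i satisfies H̃ P = λ P with H̃ = ∑_j [(β+|x|)(1-E_j) + c_j^{-1}x_j(1-E_j^{-1})] if and only if -∑_k a_k + c_i^{-1} a_i = λ a_i for all i and -β ∑_k a_k = λ; in particular, for λ ≠ 0 with λ ≠ c_i^{-1} for all i, this forces a_i = λ/(β(λ - c_i^{-1})). -/
import Mathlib


/-- a degree-one polynomial `P(x) = 1 + ∑ a_i x_i` is an
eigenfunction of `H̃` with eigenvalue `λ` iff the stated linear equations hold;
moreover for `λ ≠ 0`, `λ ≠ c_i⁻¹`, the coefficients are forced. -/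
theorem deg_one_eigenfunction (n : ℕ) (β : ℝ) (c : Fin n → ℝ)
    (hβ : 0 < β) (hc : ∀ i, 0 < c i) (a : Fin n → ℝ) (lam : ℝ) :
    let Ht : ((Fin n → ℝ) → ℝ) → ((Fin n → ℝ) → ℝ) := fun f x =>
      ∑ j, ((β + ∑ i, x i) * (f x - f (x + Pi.single j 1))
        + (c j)⁻¹ * x j * (f x - f (x - Pi.single j 1)))
    let P : (Fin n → ℝ) → ℝ := fun x => 1 + ∑ i, a i * x i
    ((∀ x, Ht P x = lam * P x) ↔
      ((∀ i, -(∑ k, a k) + (c i)⁻¹ * a i = lam * a i) ∧ -β * ∑ k, a k = lam)) ∧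
    ((∀ x, Ht P x = lam * P x) → lam ≠ 0 → (∀ i, lam ≠ (c i)⁻¹) →
      ∀ i, a i = lam / (β * (lam - (c i)⁻¹))) := by
  intro Ht P
  have hsingle : ∀ (j : Fin n) (b : Fin n → ℝ),
      ∑ i, b i * (Pi.single j (1:ℝ) : Fin n → ℝ) i = b j := by
    intro j b
    rw [Finset.sum_eq_single j]
    · simp
    · intro i _ hi; simp [Pi.single_apply, hi]
    · simp
  have hsum1 : ∀ (j : Fin n), ∑ i, (Pi.single j (1:ℝ) : Fin n → ℝ) i = 1 := by
    intro j
    rw [Finset.sum_eq_single j]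
    · simp
    · intro i _ hi; simp [Pi.single_apply, hi]
    · simp
  have key : ∀ x, Ht P x = -(β + ∑ i, x i) * (∑ j, a j) + ∑ j, (c j)⁻¹ * a j * x j := by
    intro x
    have h1 : ∀ j : Fin n, P (x + Pi.single j 1) = P x + a j := by
      intro j
      simp only [P, Pi.add_apply]
      have : ∑ i, a i * (x i + (Pi.single j (1:ℝ) : Fin n → ℝ) i)
          = ∑ i, a i * x i + ∑ i, a i * (Pi.single j (1:ℝ) : Fin n → ℝ) i := by
        rw [← Finset.sum_add_distrib]; exact Finset.sum_congr rfl fun i _ => by ring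
      rw [this, hsingle j a]; ring
    have h2 : ∀ j : Fin n, P (x - Pi.single j 1) = P x - a j := by
      intro j
      simp only [P, Pi.sub_apply]
      have : ∑ i, a i * (x i - (Pi.single j (1:ℝ) : Fin n → ℝ) i)
          = ∑ i, a i * x i - ∑ i, a i * (Pi.single j (1:ℝ) : Fin n → ℝ) i := by
        rw [← Finset.sum_sub_distrib]; exact Finset.sum_congr rfl fun i _ => by ring
      rw [this, hsingle j a]; ring
    show (∑ j, ((β + ∑ i, x i) * (P x - P (x + Pi.single j 1))
        + (c j)⁻¹ * x j * (P x - P (x - Pi.single j 1)))) = _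
    rw [show (∑ j, ((β + ∑ i, x i) * (P x - P (x + Pi.single j 1))
        + (c j)⁻¹ * x j * (P x - P (x - Pi.single j 1))))
        = ∑ j, (-(β + ∑ i, x i) * a j + (c j)⁻¹ * a j * x j) from
      Finset.sum_congr rfl fun j _ => by rw [h1 j, h2 j]; ring]
    rw [Finset.sum_add_distrib, ← Finset.mul_sum]
  have hP : ∀ x : Fin n → ℝ, P x = 1 + ∑ i, a i * x i := fun _ => rfl
  have fwd : (∀ x, Ht P x = lam * P x) →
      ((∀ i, -(∑ k, a k) + (c i)⁻¹ * a i = lam * a i) ∧ -β * ∑ k, a k = lam) := by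
    intro h
    have hP0 : P 0 = 1 := by simp [hP]
    have h0 := h 0
    rw [key, hP0] at h0
    simp at h0
    have hlam : -β * ∑ k, a k = lam := by linarith
    refine ⟨fun i => ?_, hlam⟩
    have hi := h (Pi.single i 1)
    rw [key, hP (Pi.single i 1)] at hi
    rw [hsum1 i, hsingle i a] at hi
    have hci : ∑ j, (c j)⁻¹ * a j * (Pi.single i (1:ℝ) : Fin n → ℝ) j = (c i)⁻¹ * a i := by
      rw [Finset.sum_eq_single i]
      · simp
      · intro j _ hj; simp [Pi.single_apply, hj]
      · simp
    rw [hci] at hi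
    nlinarith [hi, hlam]
  have bwd : ((∀ i, -(∑ k, a k) + (c i)⁻¹ * a i = lam * a i) ∧ -β * ∑ k, a k = lam) →
      (∀ x, Ht P x = lam * P x) := by
    rintro ⟨h1, h2⟩ x
    rw [key, hP]
    rw [show ∑ j, (c j)⁻¹ * a j * x j = ∑ j, (lam * a j + ∑ k, a k) * x j from
      Finset.sum_congr rfl fun j _ => by
        rw [show (c j)⁻¹ * a j = lam * a j + ∑ k, a k from by linarith [h1 j]]]
    rw [show ∑ j, (lam * a j + ∑ k, a k) * x j
        = lam * ∑ j, a j * x j + (∑ k, a k) * ∑ j, x j from by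
      rw [Finset.mul_sum, Finset.mul_sum, ← Finset.sum_add_distrib]
      exact Finset.sum_congr rfl fun j _ => by ring]
    linear_combination h2
  refine ⟨⟨fwd, bwd⟩, ?_⟩
  intro h hl hlc i
  obtain ⟨h1, h2⟩ := fwd h
  have hi := h1 i
  have hd : β * (lam - (c i)⁻¹) ≠ 0 :=
    mul_ne_zero (ne_of_gt hβ) (sub_ne_zero.mpr (Ne.symm (hlc i)).symm)
  rw [eq_div_iff hd]
  linear_combination (-β) * hi + h2
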